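/- arXiv:2412.13620 — 2 statements merged into one kernel-verified Lean document; each statement's English description precedes it below -/
import Mathlib

section
/- Let ε > 1 be real, q > 0 real, and s ∈ ℂ with Re s > 0. Then ∑_{n≥1} q^{s/2}·(ε^{2n−1} + ε^{1−2n})^{−s} = q^{s/2} · ∑_{k≥0} C(−s,k) · ε^{s+2k}/(ε^{2s+4k} − 1), where both sides converge absolutely. -/
open Complex

/-- Generalized binomial coefficient C(s, k) = s(s-1)⋯(s-k+1)/k!. -/
noncomputable def genBinom (s : ℂ) (k : ℕ) : ℂ :=
  (∏ i ∈ Finset.range k, (s - i)) / (Nat.factorial k)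

lemma genBinom_zero (a : ℂ) : genBinom a 0 = 1 := by simp [genBinom]

lemma genBinom_succ (a : ℂ) (k : ℕ) :
    genBinom a (k + 1) = (a - k) / (k + 1) * genBinom a k := by
  have hk : ((k.factorial : ℂ)) ≠ 0 := Nat.cast_ne_zero.2 k.factorial_ne_zero
  have hk1 : ((k : ℂ) + 1) ≠ 0 := by
    exact_mod_cast (Nat.cast_ne_zero (R := ℂ)).2 (Nat.succ_ne_zero k)
  simp only [genBinom, Finset.prod_range_succ, Nat.factorial_succ]
  push_cast
  field_simp

lemma norm_genBinom_succ (a : ℂ) (k : ℕ) :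
    ‖genBinom a (k + 1)‖ = ‖a - k‖ / ((k : ℝ) + 1) * ‖genBinom a k‖ := by
  rw [genBinom_succ, norm_mul, norm_div]
  congr 2
  rw [show ((k : ℂ) + 1) = ((k + 1 : ℕ) : ℂ) by push_cast; ring, Complex.norm_natCast]
  push_cast; ring

lemma summable_nat_mul_genBinom (a : ℂ) {r : ℝ} (hr0 : 0 ≤ r) (hr : r < 1) :
    Summable (fun k : ℕ => (k : ℝ) * ‖genBinom a k‖ * r ^ (k - 1)) := by
  set r' : ℝ := (1 + r) / 2 with hr'def
  have hrr' : r < r' := by rw [hr'def]; linarith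
  have hr'1 : r' < 1 := by rw [hr'def]; linarith
  have hr'0 : 0 < r' := by rw [hr'def]; linarith
  obtain ⟨K, hK⟩ := exists_nat_ge ((‖a‖ * r) / (r' - r))
  have hK' : ‖a‖ * r ≤ K * (r' - r) := by
    rw [div_le_iff₀ (by linarith)] at hK; linarith
  apply summable_of_ratio_norm_eventually_le hr'1
  filter_upwards [Filter.eventually_ge_atTop (K + 1)] with k hk
  obtain ⟨j, rfl⟩ : ∃ j, k = j + 1 := ⟨k - 1, by omega⟩
  have hnorm : ∀ i : ℕ, ‖a - (i : ℂ)‖ ≤ ‖a‖ + i := fun i => by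
    calc ‖a - (i : ℂ)‖ ≤ ‖a‖ + ‖(i : ℂ)‖ := norm_sub_le _ _
    _ = ‖a‖ + i := by rw [Complex.norm_natCast]
  have h1 : ‖a - ((j + 1 : ℕ) : ℂ)‖ * r ≤ r' * ((j : ℝ) + 1) := by
    have hj : (K : ℝ) ≤ (j : ℝ) := by exact_mod_cast Nat.le_of_succ_le_succ hk
    have := hnorm (j + 1)
    push_cast at this ⊢
    nlinarith [norm_nonneg (a - ((j : ℂ) + 1))]
  rw [Real.norm_of_nonneg (by positivity), Real.norm_of_nonneg (by positivity)]
  have hrec := norm_genBinom_succ a (j + 1)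
  push_cast at hrec h1
  have hc := norm_nonneg (genBinom a (j + 1))
  have hp : (0 : ℝ) ≤ r ^ j := by positivity
  have key2 : ((j : ℝ) + 1 + 1) * ‖genBinom a (j + 1 + 1)‖ * r ^ (j + 1) ≤
      r' * (((j : ℝ) + 1) * ‖genBinom a (j + 1)‖ * r ^ j) := by
    have e1 : ((j : ℝ) + 1 + 1) * ‖genBinom a (j + 1 + 1)‖
        = ‖a - ((j : ℂ) + 1)‖ * ‖genBinom a (j + 1)‖ := by
      rw [hrec]; field_simp
    rw [e1, pow_succ]
    nlinarith [mul_le_mul_of_nonneg_right h1 (mul_nonneg hc hp)]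
  simp only [Nat.add_sub_cancel]
  push_cast
  linarith [key2]

lemma summable_genBinom_mul_pow (a : ℂ) {r : ℝ} (hr0 : 0 ≤ r) (hr : r < 1) :
    Summable (fun k : ℕ => ‖genBinom a k‖ * r ^ k) := by
  rw [← summable_nat_add_iff 1]
  apply Summable.of_nonneg_of_le (fun k => by positivity) (fun k => ?_)
    ((summable_nat_add_iff 1).2 (summable_nat_mul_genBinom a hr0 hr))
  simp only [Nat.add_sub_cancel]
  have hc := norm_nonneg (genBinom a (k + 1))
  have hp : (0 : ℝ) ≤ r ^ k := by positivity
  have : r ^ (k + 1) = r * r ^ k := by ring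
  rw [this]
  push_cast
  nlinarith [mul_nonneg (by linarith : (0:ℝ) ≤ (k:ℝ) + 1 - r) (mul_nonneg hc hp)]

lemma summable_genBinom_mul_cpow (a : ℂ) {z : ℂ} (hz : ‖z‖ < 1) :
    Summable (fun k : ℕ => genBinom a k * z ^ k) := by
  apply Summable.of_norm
  have := summable_genBinom_mul_pow a (norm_nonneg z) hz
  apply this.congr
  intro k
  rw [norm_mul, norm_pow]

lemma summable_norm_deriv_genBinom (a : ℂ) {z : ℂ} (hz : ‖z‖ < 1) :
    Summable (fun k : ℕ => genBinom a k * ((k : ℂ) * z ^ (k - 1))) := by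
  apply Summable.of_norm
  apply (summable_nat_mul_genBinom a (norm_nonneg z) hz).congr
  intro k
  rw [norm_mul, norm_mul, norm_pow, Complex.norm_natCast]
  ring

lemma one_add_mem_slitPlane {z : ℂ} (hz : ‖z‖ < 1) : 1 + z ∈ Complex.slitPlane := by
  left
  simp only [add_re, one_re]
  have h1 : |z.re| ≤ ‖z‖ := by
    exact Complex.abs_re_le_norm z
  have := abs_le.1 h1
  linarith [this.1]

theorem hasSum_genBinom (a : ℂ) {x : ℂ} (hx : ‖x‖ < 1) :
    HasSum (fun k : ℕ => genBinom a k * x ^ k) ((1 + x) ^ a) := by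
  set c : ℕ → ℂ := genBinom a with hc
  set F : ℂ → ℂ := fun z => ∑' k : ℕ, c k * z ^ k with hF
  have hderiv : ∀ z : ℂ, ‖z‖ < 1 →
      HasDerivAt F (∑' k : ℕ, c k * ((k : ℂ) * z ^ (k - 1))) z := by
    intro z hz
    set ρ : ℝ := (‖z‖ + 1) / 2 with hρ
    have hρ0 : 0 < ρ := by positivity
    have hρ1 : ρ < 1 := by rw [hρ]; linarith
    have hzρ : ‖z‖ < ρ := by rw [hρ]; linarith
    exact hasDerivAt_tsum_of_isPreconnected (summable_nat_mul_genBinom a hρ0.le hρ1)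
      Metric.isOpen_ball ((convex_ball (0:ℂ) ρ).isPreconnected)
      (fun k w _ => (hasDerivAt_pow k w).const_mul (c k))
      (fun k w hw => by
        rw [norm_mul, norm_mul, norm_pow, Complex.norm_natCast]
        rw [Metric.mem_ball, dist_zero_right] at hw
        have h1 : ‖w‖ ^ (k - 1) ≤ ρ ^ (k - 1) := pow_le_pow_left₀ (norm_nonneg w) hw.le _
        have h2 := norm_nonneg (c k)
        calc ‖c k‖ * ((k : ℝ) * ‖w‖ ^ (k - 1)) ≤ ‖c k‖ * ((k : ℝ) * ρ ^ (k - 1)) := by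
              gcongr
          _ = (k : ℝ) * ‖c k‖ * ρ ^ (k - 1) := by ring)
      (by rw [Metric.mem_ball, dist_zero_right, norm_zero]; exact hρ0)
      (summable_genBinom_mul_cpow a (by rw [norm_zero]; norm_num))
      (by rw [Metric.mem_ball, dist_zero_right]; exact hzρ)
  have key : ∀ z : ℂ, ‖z‖ < 1 →
      (∑' k : ℕ, c k * ((k : ℂ) * z ^ (k - 1))) * (1 + z) = a * F z := by
    intro z hz
    set D : ℂ := ∑' k : ℕ, c k * ((k : ℂ) * z ^ (k - 1)) with hD
    have hsD : HasSum (fun k : ℕ => c k * ((k : ℂ) * z ^ (k - 1))) D :=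
      (summable_norm_deriv_genBinom a hz).hasSum
    have hs1 : HasSum (fun k : ℕ => c k * z ^ k) (F z) :=
      (summable_genBinom_mul_cpow a hz).hasSum
    have h2 : HasSum (fun k : ℕ => c (k + 1) * (((k : ℂ) + 1) * z ^ k)) D := by
      have base : HasSum (fun k : ℕ => c k * ((k : ℂ) * z ^ (k - 1)))
          (D + ∑ i ∈ Finset.range 1, c i * ((i : ℂ) * z ^ (i - 1))) := by
        simpa using hsD
      have h2' := (hasSum_nat_add_iff
        (f := fun k : ℕ => c k * ((k : ℂ) * z ^ (k - 1))) 1 (g := D)).2 base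
      have e : (fun k : ℕ => c (k + 1) * (((k + 1 : ℕ) : ℂ) * z ^ (k + 1 - 1)))
          = fun k : ℕ => c (k + 1) * (((k : ℂ) + 1) * z ^ k) := by
        funext k; simp only [Nat.add_sub_cancel]; push_cast; ring
      rwa [e] at h2'
    have h3 : HasSum (fun k : ℕ => (a - k) * (c k * z ^ k)) D := by
      have e : (fun k : ℕ => c (k + 1) * (((k : ℂ) + 1) * z ^ k))
          = fun k : ℕ => (a - k) * (c k * z ^ k) := by
        funext k
        rw [hc, genBinom_succ]
        have hk1 : ((k : ℂ) + 1) ≠ 0 := by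
          exact_mod_cast (Nat.cast_ne_zero (R := ℂ)).2 (Nat.succ_ne_zero k)
        field_simp
      rwa [e] at h2
    have h5 : HasSum (fun k : ℕ => (k : ℂ) * (c k * z ^ k)) (D * z) := by
      have h4 := hsD.mul_right z
      have e : (fun k : ℕ => c k * ((k : ℂ) * z ^ (k - 1)) * z)
          = fun k : ℕ => (k : ℂ) * (c k * z ^ k) := by
        funext k
        cases k with
        | zero => simp
        | succ j =>
          simp only [Nat.add_sub_cancel]
          push_cast
          ring
      rwa [e] at h4
    have h6 : HasSum (fun k : ℕ => a * (c k * z ^ k)) (D + D * z) := by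
      have h6' := h3.add h5
      have e : (fun k : ℕ => (a - k) * (c k * z ^ k) + (k : ℂ) * (c k * z ^ k))
          = fun k : ℕ => a * (c k * z ^ k) := by
        funext k; ring
      rwa [e] at h6'
    have h7 : HasSum (fun k : ℕ => a * (c k * z ^ k)) (a * F z) := hs1.mul_left a
    have huniq := h6.unique h7
    rw [mul_add, mul_one]
    exact huniq
  -- constancy of G z = F z * (1+z)^(-a)
  set G : ℂ → ℂ := fun z => F z * (1 + z) ^ (-a) with hG
  have hGderiv : ∀ z ∈ Metric.ball (0 : ℂ) 1, HasDerivAt G 0 z := by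
    intro z hz
    rw [Metric.mem_ball, dist_zero_right] at hz
    have h1z : (1 + z) ∈ Complex.slitPlane := one_add_mem_slitPlane hz
    have h1z0 : (1 + z) ≠ 0 := Complex.slitPlane_ne_zero h1z
    have hcp : HasDerivAt (fun w : ℂ => (1 + w) ^ (-a)) (-a * (1 + z) ^ (-a - 1) * 1) z :=
      HasDerivAt.cpow_const ((hasDerivAt_id z).const_add 1) h1z
    have hD := hderiv z hz
    have hmul := hD.mul hcp
    have h0 : (∑' k : ℕ, c k * ((k : ℂ) * z ^ (k - 1))) * (1 + z) ^ (-a)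
        + F z * (-a * (1 + z) ^ (-a - 1) * 1) = 0 := by
      have hsplit : (1 + z) ^ (-a) = (1 + z) ^ (-a - 1) * (1 + z) := by
        rw [show (-a : ℂ) = -a - 1 + 1 by ring, Complex.cpow_add _ _ h1z0, Complex.cpow_one]
        ring_nf
      rw [hsplit]
      linear_combination (1 + z) ^ (-a - 1) * key z hz
    rw [h0] at hmul
    exact hmul
  have hmem : x ∈ Metric.ball (0 : ℂ) 1 := by
    rw [Metric.mem_ball, dist_zero_right]; exact hx
  have hmem0 : (0 : ℂ) ∈ Metric.ball (0 : ℂ) 1 := by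
    rw [Metric.mem_ball, dist_zero_right, norm_zero]; norm_num
  have hconst : G x = G 0 := by
    apply (convex_ball (0 : ℂ) 1).is_const_of_fderivWithin_eq_zero (𝕜 := ℂ)
      (fun z hz => (hGderiv z hz).differentiableAt.differentiableWithinAt)
      (fun z hz => ?_) hmem hmem0
    rw [fderivWithin_of_isOpen Metric.isOpen_ball hz,
      (hasDerivAt_iff_hasFDerivAt.mp (hGderiv z hz)).fderiv]
    ext1
    simp
  have hF0 : F 0 = 1 := by
    show (∑' k : ℕ, c k * (0 : ℂ) ^ k) = 1
    rw [tsum_eq_single 0 (fun k hk => by simp [zero_pow hk])]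
    simp [hc, genBinom_zero]
  have hG0 : G 0 = 1 := by
    show F 0 * (1 + 0 : ℂ) ^ (-a) = 1
    rw [hF0]
    simp
  have h1x0 : (1 + x) ≠ 0 := Complex.slitPlane_ne_zero (one_add_mem_slitPlane hx)
  have hcpne : (1 + x) ^ a ≠ 0 := by
    rw [Ne, Complex.cpow_eq_zero_iff]
    tauto
  have hFx : F x = (1 + x) ^ a := by
    have h1 : F x * (1 + x) ^ (-a) = 1 := hconst.trans hG0
    rw [Complex.cpow_neg] at h1
    field_simp at h1
    exact h1
  have := (summable_genBinom_mul_cpow a hx).hasSum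
  rwa [show (∑' k : ℕ, genBinom a k * x ^ k) = F x from rfl, hFx] at this

set_option maxHeartbeats 2000000 in
theorem odd_fib_zeta_binomial (ε q : ℝ) (hε : 1 < ε) (hq : 0 < q)
    (s : ℂ) (hs : 0 < s.re) :
    Summable (fun n : ℕ =>
      ‖(q : ℂ) ^ (s / 2) *
        ((ε ^ (2 * ((n : ℤ) + 1) - 1) + ε ^ (1 - 2 * ((n : ℤ) + 1)) : ℝ) : ℂ) ^ (-s)‖) ∧
    Summable (fun k : ℕ =>
      ‖genBinom (-s) k * (ε : ℂ) ^ (s + 2 * (k : ℂ)) / ((ε : ℂ) ^ (2 * s + 4 * (k : ℂ)) - 1)‖) ∧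
    (∑' n : ℕ, (q : ℂ) ^ (s / 2) *
        ((ε ^ (2 * ((n : ℤ) + 1) - 1) + ε ^ (1 - 2 * ((n : ℤ) + 1)) : ℝ) : ℂ) ^ (-s)) =
      (q : ℂ) ^ (s / 2) *
        ∑' k : ℕ, genBinom (-s) k * (ε : ℂ) ^ (s + 2 * (k : ℂ)) /
          ((ε : ℂ) ^ (2 * s + 4 * (k : ℂ)) - 1) := by
  have hε0 : (0 : ℝ) < ε := lt_trans one_pos hε
  have hεC : (ε : ℂ) ≠ 0 := Complex.ofReal_ne_zero.2 hε0.ne'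
  have hL : 0 < Real.log ε := Real.log_pos hε
  set L : ℝ := Real.log ε with hLdef
  set P : ℂ → ℂ := fun z => Complex.exp (z * (L : ℂ)) with hPdef
  have hP : ∀ z : ℂ, (ε : ℂ) ^ z = P z := by
    intro z
    rw [Complex.cpow_def_of_ne_zero hεC, ← Complex.ofReal_log hε0.le, mul_comm]
  have hPadd : ∀ z w : ℂ, P (z + w) = P z * P w := by
    intro z w; simp only [hPdef, add_mul, Complex.exp_add]
  have hPnat : ∀ (m : ℕ) (z : ℂ), P ((m : ℂ) * z) = P z ^ m := by
    intro m z; simp only [hPdef, mul_assoc, Complex.exp_nat_mul]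
  have hPne : ∀ z : ℂ, P z ≠ 0 := fun z => Complex.exp_ne_zero _
  have hPinv : ∀ z : ℂ, P (-z) = (P z)⁻¹ := by
    intro z; simp only [hPdef, neg_mul, Complex.exp_neg]
  have hPnorm : ∀ z : ℂ, ‖P z‖ = ε ^ z.re := by
    intro z
    rw [hPdef]
    rw [Complex.norm_exp, Real.rpow_def_of_pos hε0]
    congr 1
    simp [Complex.mul_re, mul_comm, hLdef]
  have hPm : ∀ m : ℕ, ((ε ^ m : ℝ) : ℂ) = P m := by
    intro m
    push_cast
    rw [show ((m : ℂ)) = (m : ℂ) * 1 by ring, hPnat]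
    congr 1
    rw [hPdef]
    simp only [one_mul]
    rw [← Complex.ofReal_exp, Real.exp_log hε0]
  have hPpow : ∀ (m : ℕ) (w : ℂ), ((ε ^ m : ℝ) : ℂ) ^ w = P ((m : ℂ) * w) := by
    intro m w
    rw [Complex.cpow_def_of_ne_zero (Complex.ofReal_ne_zero.2 (pow_pos hε0 m).ne'),
      ← Complex.ofReal_log (pow_pos hε0 m).le, Real.log_pow]
    rw [hPdef]
    congr 1
    push_cast
    ring
  set σ : ℝ := s.re with hσ
  set c : ℕ → ℂ := genBinom (-s) with hcdef
  set f : ℕ → ℕ → ℂ := fun n k => c k * P (-(2 * (n : ℂ) + 1) * (s + 2 * (k : ℂ))) with hfdef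
  have hterm : ∀ n : ℕ,
      ((ε ^ (2 * ((n : ℤ) + 1) - 1) + ε ^ (1 - 2 * ((n : ℤ) + 1)) : ℝ) : ℂ) ^ (-s)
        = ∑' k : ℕ, f n k := by
    intro n
    set m : ℕ := 2 * n + 1 with hm
    have hm1 : (2 * ((n : ℤ) + 1) - 1) = (m : ℤ) := by rw [hm]; push_cast; ring
    have hm2 : (1 - 2 * ((n : ℤ) + 1)) = -(m : ℤ) := by rw [hm]; push_cast; ring
    have hmC : ((m : ℕ) : ℂ) = 2 * (n : ℂ) + 1 := by rw [hm]; push_cast; ring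
    have ht1 : (1 : ℝ) < ε ^ m := one_lt_pow₀ hε (by omega)
    have ht0 : (0 : ℝ) < ε ^ m := pow_pos hε0 m
    set x : ℝ := ((ε ^ m)⁻¹) ^ 2 with hx
    have hx0 : 0 < x := by positivity
    have hxlt : x < 1 := by
      have hi0 : 0 < (ε ^ m)⁻¹ := by positivity
      have := mul_inv_cancel₀ ht0.ne'
      nlinarith
    have hbase : (ε ^ (2 * ((n : ℤ) + 1) - 1) + ε ^ (1 - 2 * ((n : ℤ) + 1)) : ℝ)
        = ε ^ m * (1 + x) := by
      rw [hm1, hm2, zpow_natCast, zpow_neg, zpow_natCast, hx]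
      field_simp
    rw [hbase, Complex.ofReal_mul, Complex.mul_cpow_ofReal_nonneg ht0.le (by positivity),
      hPpow m (-s)]
    have hxC : ‖(x : ℂ)‖ < 1 := by
      rw [Complex.norm_real, Real.norm_eq_abs, abs_of_pos hx0]; exact hxlt
    have hbin := hasSum_genBinom (-s) hxC
    have hsum1 : ((1 + x : ℝ) : ℂ) ^ (-s) = ∑' k : ℕ, c k * (x : ℂ) ^ k := by
      rw [show ((1 + x : ℝ) : ℂ) = 1 + (x : ℂ) by push_cast; ring]
      exact hbin.tsum_eq.symm
    rw [hsum1, ← tsum_mul_left]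
    congr 1
    funext k
    have hxP : (x : ℂ) = P (((2 : ℕ) : ℂ) * (-(m : ℂ))) := by
      have h1 : (x : ℂ) = (((ε ^ m : ℝ) : ℂ))⁻¹ ^ 2 := by rw [hx]; push_cast; ring
      rw [h1, hPm, ← hPinv, hPnat 2 (-(m : ℂ))]
    rw [hxP, ← hPnat k (((2 : ℕ) : ℂ) * (-(m : ℂ))), mul_left_comm, ← hPadd]
    congr 2
    rw [hm]
    push_cast
    ring
  have hre2 : ∀ k : ℕ, (s + 2 * (k : ℂ)).re = σ + 2 * k := by
    intro k
    simp [Complex.add_re, Complex.mul_re, hσ]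
  have hfnorm : ∀ n k : ℕ, ‖f n k‖ = ‖c k‖ * ε ^ (-(2 * (n : ℝ) + 1) * (σ + 2 * k)) := by
    intro n k
    show ‖c k * P (-(2 * (n : ℂ) + 1) * (s + 2 * (k : ℂ)))‖ = _
    rw [norm_mul, hPnorm]
    congr 2
    rw [show (-(2 * (n : ℂ) + 1) * (s + 2 * (k : ℂ)))
        = ((-(2 * (n : ℝ) + 1) : ℝ) : ℂ) * (s + 2 * (k : ℂ)) by push_cast; ring]
    rw [show ((((-(2 * (n : ℝ) + 1) : ℝ)) : ℂ) * (s + 2 * (k : ℂ))).re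
        = (-(2 * (n : ℝ) + 1)) * (s + 2 * (k : ℂ)).re by simp [Complex.mul_re]]
    rw [hre2]
  set γ : ℝ := ε ^ (-σ) with hγ
  have hγ0 : 0 < γ := Real.rpow_pos_of_pos hε0 _
  have hγ1 : γ < 1 := Real.rpow_lt_one_of_one_lt_of_neg hε (by linarith)
  set r0 : ℝ := ε ^ (-(2 : ℝ)) with hr0def
  have hr00 : 0 < r0 := Real.rpow_pos_of_pos hε0 _
  have hr01 : r0 < 1 := Real.rpow_lt_one_of_one_lt_of_neg hε (by norm_num)
  have hfb : ∀ n k : ℕ, ‖f n k‖ ≤ γ ^ (2 * n + 1) * (‖c k‖ * r0 ^ k) := by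
    intro n k
    rw [hfnorm]
    have e1 : ε ^ (-(2 * (n : ℝ) + 1) * (σ + 2 * k))
        = ε ^ ((-(2 * (n : ℝ) + 1)) * σ) * ε ^ ((-(2 * (n : ℝ) + 1)) * (2 * (k : ℝ))) := by
      rw [← Real.rpow_add hε0]; ring_nf
    have e2 : ε ^ ((-(2 * (n : ℝ) + 1)) * σ) = γ ^ (2 * n + 1) := by
      rw [hγ, ← Real.rpow_natCast (ε ^ (-σ)) (2 * n + 1), ← Real.rpow_mul hε0.le]
      congr 1
      push_cast
      ring
    have e3 : ε ^ ((-(2 * (n : ℝ) + 1)) * (2 * (k : ℝ))) ≤ r0 ^ k := by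
      rw [hr0def, ← Real.rpow_natCast (ε ^ (-(2 : ℝ))) k, ← Real.rpow_mul hε0.le]
      apply Real.rpow_le_rpow_of_exponent_le hε.le
      have h1 : (0 : ℝ) ≤ (n : ℝ) := Nat.cast_nonneg n
      have h2 : (0 : ℝ) ≤ (k : ℝ) := Nat.cast_nonneg k
      nlinarith [mul_nonneg h1 h2]
    rw [e1, e2]
    have hck := norm_nonneg (c k)
    have h4 : (0 : ℝ) ≤ γ ^ (2 * n + 1) := by positivity
    calc ‖c k‖ * (γ ^ (2 * n + 1) * ε ^ ((-(2 * (n : ℝ) + 1)) * (2 * (k : ℝ))))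
        ≤ ‖c k‖ * (γ ^ (2 * n + 1) * r0 ^ k) := by
          exact mul_le_mul_of_nonneg_left (mul_le_mul_of_nonneg_left e3 h4) hck
      _ = γ ^ (2 * n + 1) * (‖c k‖ * r0 ^ k) := by ring
  have hg : Summable (fun n : ℕ => γ ^ (2 * n + 1)) := by
    have hbase : Summable (fun n : ℕ => γ * (γ ^ 2) ^ n) :=
      (summable_geometric_of_lt_one (by positivity) (by nlinarith)).mul_left γ
    apply hbase.congr
    intro n
    rw [← pow_mul]
    ring
  have hh : Summable (fun k : ℕ => ‖c k‖ * r0 ^ k) :=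
    summable_genBinom_mul_pow (-s) hr00.le hr01
  have hprod : Summable (fun p : ℕ × ℕ => ‖f p.1 p.2‖) :=
    Summable.of_nonneg_of_le (fun p => norm_nonneg _) (fun p => hfb p.1 p.2)
      (hg.mul_of_nonneg hh (fun n => by positivity) (fun k => by positivity))
  have hprod' : Summable (fun p : ℕ × ℕ => ‖f p.2 p.1‖) := by
    apply Summable.of_nonneg_of_le (fun p => norm_nonneg _) (fun p => ?_)
      (hh.mul_of_nonneg hg (fun k => by positivity) (fun n => by positivity))
    calc ‖f p.2 p.1‖ ≤ γ ^ (2 * p.2 + 1) * (‖c p.1‖ * r0 ^ p.1) := hfb p.2 p.1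
      _ = (‖c p.1‖ * r0 ^ p.1) * γ ^ (2 * p.2 + 1) := by ring
  have hps := (summable_prod_of_nonneg (fun p => norm_nonneg _)).1 hprod
  have hps' := (summable_prod_of_nonneg (fun p => norm_nonneg _)).1 hprod'
  have hsumk : ∀ k : ℕ, HasSum (fun n : ℕ => f n k)
      (c k * P (s + 2 * (k : ℂ)) / (P (2 * s + 4 * (k : ℂ)) - 1)) := by
    intro k
    have hkR : (0 : ℝ) ≤ (k : ℝ) := Nat.cast_nonneg k
    set w : ℂ := P (-(s + 2 * (k : ℂ))) with hw
    have hw1 : ‖w‖ < 1 := by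
      rw [hw, hPnorm]
      apply Real.rpow_lt_one_of_one_lt_of_neg hε
      rw [Complex.neg_re, hre2]
      linarith
    have hw2 : ‖w ^ 2‖ < 1 := by rw [norm_pow]; nlinarith [norm_nonneg w]
    have hgeo := hasSum_geometric_of_norm_lt_one hw2
    have h1 : HasSum (fun n : ℕ => (c k * w) * (w ^ 2) ^ n) (c k * w * (1 - w ^ 2)⁻¹) :=
      hgeo.mul_left _
    have e : (fun n : ℕ => (c k * w) * (w ^ 2) ^ n) = fun n : ℕ => f n k := by
      funext n
      show _ = c k * P (-(2 * (n : ℂ) + 1) * (s + 2 * (k : ℂ)))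
      rw [show (-(2 * (n : ℂ) + 1) * (s + 2 * (k : ℂ)))
          = (((2 * n + 1 : ℕ) : ℂ)) * (-(s + 2 * (k : ℂ))) by push_cast; ring, hPnat, ← hw]
      rw [pow_add, pow_mul, pow_one]
      ring
    rw [e] at h1
    convert h1 using 1
    set v : ℂ := P (s + 2 * (k : ℂ)) with hv
    have hwv : w = v⁻¹ := by rw [hw, hv, hPinv]
    have hv0 : v ≠ 0 := hPne _
    have hvnorm : 1 < ‖v‖ := by
      rw [hv, hPnorm, hre2]
      rw [Real.one_lt_rpow_iff_of_pos hε0]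
      exact Or.inl ⟨hε, by linarith⟩
    have hP24 : P (2 * s + 4 * (k : ℂ)) = v ^ 2 := by
      rw [show (2 * s + 4 * (k : ℂ)) = ((2 : ℕ) : ℂ) * (s + 2 * (k : ℂ)) by push_cast; ring,
        hPnat, hv]
    have hden1 : (1 : ℂ) - w ^ 2 ≠ 0 := by
      intro h
      have : w ^ 2 = 1 := by linear_combination -h
      rw [this] at hw2
      simp at hw2
    have hden2 : v ^ 2 - 1 ≠ 0 := by
      intro h
      have h2 : v ^ 2 = 1 := by linear_combination h
      have : ‖v ^ 2‖ = 1 := by rw [h2, norm_one]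
      rw [norm_pow] at this
      nlinarith
    rw [hP24, hwv]
    field_simp
  refine ⟨?_, ?_, ?_⟩
  · apply Summable.of_nonneg_of_le (fun n => norm_nonneg _) (fun n => ?_)
      (hps.2.mul_left ‖(q : ℂ) ^ (s / 2)‖)
    rw [norm_mul, hterm n]
    exact mul_le_mul_of_nonneg_left (norm_tsum_le_tsum_norm (hps.1 n)) (norm_nonneg _)
  · apply Summable.of_nonneg_of_le (fun k => norm_nonneg _) (fun k => ?_) hps'.2
    simp only [hP]
    rw [← (hsumk k).tsum_eq]
    exact norm_tsum_le_tsum_norm (hps'.1 k)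
  · simp only [hP]
    rw [tsum_mul_left]
    congr 1
    have huncurry : Summable (Function.uncurry f) := Summable.of_norm hprod
    trans (∑' n : ℕ, ∑' k : ℕ, f n k)
    · exact tsum_congr hterm
    trans (∑' k : ℕ, ∑' n : ℕ, f n k)
    · exact (Summable.tsum_comm huncurry).symm
    exact tsum_congr fun k => (hsumk k).tsum_eq
end

section
/- For Re s > 0 and any real m, the Fourier transform of f(x) = (ε^x + ε^{−x})^{−s} satisfies ∫_{−∞}^{∞} (ε^x + ε^{−x})^{−s} e^{−2πimx} dx = Γ(s/2 + πim/log ε)·Γ(s/2 − πim/log ε)/(2·Γ(s)·log ε), where ε > 1 is real. -/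
open Complex Real

open MeasureTheory Set in
lemma cpow_pos_eq_exp {r : ℝ} (hr : 0 < r) (w : ℂ) :
    ((r : ℝ) : ℂ) ^ w = Complex.exp (w * Real.log r) := by
  rw [Complex.cpow_def_of_ne_zero (by exact_mod_cast hr.ne'), ← Complex.ofReal_log hr.le,
    mul_comm]

open MeasureTheory Set in
lemma beta_Ioi (u v : ℂ) (hu : 0 < u.re) (hv : 0 < v.re) :
    (∫ t in Ioi (0:ℝ), ((t : ℝ) : ℂ) ^ (u - 1) * (((1 + t : ℝ)) : ℂ) ^ (-(u + v))) =
      Complex.Gamma u * Complex.Gamma v / Complex.Gamma (u + v) := by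
  have himg : (fun x : ℝ => x / (1 - x)) '' Ioo 0 1 = Ioi 0 := by
    ext t
    simp only [mem_image, mem_Ioo, mem_Ioi]
    constructor
    · rintro ⟨x, ⟨hx0, hx1⟩, rfl⟩
      exact div_pos hx0 (by linarith)
    · intro ht
      refine ⟨t / (1 + t), ⟨div_pos ht (by linarith), ?_⟩, ?_⟩
      · rw [div_lt_one (by linarith)]; linarith
      · have h1 : (1:ℝ) + t ≠ 0 := by linarith
        have h2 : 1 - t / (1 + t) = 1 / (1 + t) := by field_simp; ring
        rw [h2]
        field_simp
  have hderiv : ∀ x ∈ Ioo (0:ℝ) 1, HasDerivWithinAt (fun x : ℝ => x / (1 - x))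
      (((1 - x) ^ 2)⁻¹) (Ioo 0 1) x := by
    intro x ⟨hx0, hx1⟩
    have h1 : (1:ℝ) - x ≠ 0 := by linarith
    have := (hasDerivAt_id x).div ((hasDerivAt_const x 1).sub (hasDerivAt_id x)) h1
    exact this.hasDerivWithinAt.congr_deriv (by simp only [Pi.sub_apply, id_eq]; field_simp; ring)
  have hinj : InjOn (fun x : ℝ => x / (1 - x)) (Ioo 0 1) := by
    rintro a ⟨ha0, ha1⟩ b ⟨hb0, hb1⟩ hab
    have ha : (1:ℝ) - a ≠ 0 := by linarith
    have hb : (1:ℝ) - b ≠ 0 := by linarith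
    simp only at hab
    field_simp at hab
    linarith
  have hGne : Complex.Gamma (u + v) ≠ 0 := by
    refine Complex.Gamma_ne_zero fun n => ?_
    intro h
    have h1 : (u+v).re = -(n:ℝ) := by rw [h]; simp
    have h2 : 0 < (u+v).re := by rw [Complex.add_re]; positivity
    rw [h1] at h2
    have : (0:ℝ) ≤ n := n.cast_nonneg
    linarith
  have hIoo : (∫ x in Ioo (0:ℝ) 1, |((1 - x) ^ 2)⁻¹| •
      (((x / (1 - x) : ℝ) : ℂ) ^ (u - 1) * (((1 + x / (1 - x) : ℝ)) : ℂ) ^ (-(u + v)))) =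
      Complex.betaIntegral u v := by
    rw [Complex.betaIntegral, intervalIntegral.integral_of_le zero_le_one,
      MeasureTheory.integral_Ioc_eq_integral_Ioo]
    refine setIntegral_congr_fun measurableSet_Ioo fun x ⟨hx0, hx1⟩ => ?_
    have h1x : (0:ℝ) < 1 - x := by linarith
    have e1 : (1:ℝ) + x / (1 - x) = (1 - x)⁻¹ := by field_simp; ring
    have e2 : (1 - (x:ℂ)) = ((1 - x : ℝ) : ℂ) := by push_cast; ring
    have e3 : |((1 - x) ^ 2)⁻¹| = Real.exp (-(2 * Real.log (1 - x))) := by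
      rw [show (2:ℝ) * Real.log (1 - x) = Real.log ((1 - x) ^ 2) by
          rw [Real.log_pow]; push_cast; ring,
        Real.exp_neg, Real.exp_log (by positivity), abs_of_pos (by positivity)]
    rw [e1, e2, e3, cpow_pos_eq_exp (div_pos hx0 h1x), cpow_pos_eq_exp (inv_pos.mpr h1x),
      cpow_pos_eq_exp hx0, cpow_pos_eq_exp h1x, Real.log_div hx0.ne' h1x.ne', Real.log_inv,
      Complex.real_smul, Complex.ofReal_exp, ← Complex.exp_add, ← Complex.exp_add,
      ← Complex.exp_add]
    congr 1
    push_cast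
    ring
  rw [← himg, integral_image_eq_integral_abs_deriv_smul measurableSet_Ioo hderiv hinj, hIoo,
    Complex.Gamma_mul_Gamma_eq_betaIntegral hu hv, mul_comm,
    mul_div_assoc, div_self hGne, mul_one]

open MeasureTheory Set in
theorem fourier_transform_odd (ε : ℝ) (hε : 1 < ε) (s : ℂ) (hs : 0 < s.re)
    (m : ℝ) :
    (∫ x : ℝ, ((Real.rpow ε x + Real.rpow ε (-x) : ℝ) : ℂ) ^ (-s) *
        Complex.exp (-2 * Real.pi * Complex.I * m * x)) =
      Complex.Gamma (s / 2 + Real.pi * Complex.I * m / Real.log ε) *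
        Complex.Gamma (s / 2 - Real.pi * Complex.I * m / Real.log ε) /
          (2 * Complex.Gamma s * Real.log ε) := by
  set L : ℝ := Real.log ε with hLdef
  have hL : 0 < L := Real.log_pos hε
  have hLC : (L : ℂ) ≠ 0 := by exact_mod_cast hL.ne'
  set w : ℂ := s / 2 - Real.pi * Complex.I * m / L with hwdef
  set v : ℂ := s / 2 + Real.pi * Complex.I * m / L with hvdef
  have hpure : (Real.pi * Complex.I * m / L : ℂ).re = 0 := by
    have : (Real.pi * Complex.I * m / L : ℂ) = ((Real.pi * m / L : ℝ) : ℂ) * Complex.I := by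
      push_cast; ring
    rw [this]
    simp
  have hhalf : (s / 2).re = s.re / 2 := by
    rw [show (2:ℂ) = ((2:ℝ):ℂ) by norm_num, Complex.div_ofReal_re]
  have hw : 0 < w.re := by rw [hwdef, Complex.sub_re, hpure, hhalf]; linarith
  have hv : 0 < v.re := by rw [hvdef, Complex.add_re, hpure, hhalf]; linarith
  have hwv : w + v = s := by rw [hwdef, hvdef]; ring
  have hkey := beta_Ioi w v hw hv
  rw [hwv] at hkey
  -- substitution t = exp (2 L x)
  have himg : (fun x : ℝ => Real.exp (2 * L * x)) '' univ = Ioi 0 := by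
    ext t
    simp only [image_univ, mem_range, mem_Ioi]
    constructor
    · rintro ⟨x, rfl⟩; exact Real.exp_pos _
    · intro ht
      exact ⟨Real.log t / (2 * L), by
        rw [mul_div_cancel₀ _ (by positivity), Real.exp_log ht]⟩
  have hderiv : ∀ x ∈ (univ : Set ℝ), HasDerivWithinAt (fun x : ℝ => Real.exp (2 * L * x))
      (2 * L * Real.exp (2 * L * x)) univ x := by
    intro x _
    have h := (((hasDerivAt_id x).const_mul (2 * L)).exp).hasDerivWithinAt (s := univ)
    simp only [id_eq, mul_one] at h
    exact h.congr_deriv (by ring)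
  have hinj : InjOn (fun x : ℝ => Real.exp (2 * L * x)) univ := by
    rintro a - b - hab
    have := Real.exp_injective hab
    exact mul_left_cancel₀ (by positivity : (2:ℝ) * L ≠ 0) this
  rw [← himg, integral_image_eq_integral_abs_deriv_smul MeasurableSet.univ hderiv hinj,
    setIntegral_univ] at hkey
  have hpt : ∀ x : ℝ, |2 * L * Real.exp (2 * L * x)| •
      (((Real.exp (2 * L * x) : ℝ) : ℂ) ^ (w - 1) *
        (((1 + Real.exp (2 * L * x) : ℝ)) : ℂ) ^ (-s)) =
      (2 * L : ℂ) * (((Real.rpow ε x + Real.rpow ε (-x) : ℝ) : ℂ) ^ (-s) *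
        Complex.exp (-2 * Real.pi * Complex.I * m * x)) := by
    intro x
    have hsum : (Real.rpow ε x + Real.rpow ε (-x) : ℝ) =
        Real.exp (-(L * x)) * (1 + Real.exp (2 * L * x)) := by
      rw [show Real.rpow ε x = ε ^ x from rfl, show Real.rpow ε (-x) = ε ^ (-x) from rfl,
        Real.rpow_def_of_pos (by linarith), Real.rpow_def_of_pos (by linarith), ← hLdef,
        mul_add, mul_one, ← Real.exp_add]
      ring_nf
    rw [hsum, Complex.ofReal_mul, Complex.mul_cpow_ofReal_nonneg (Real.exp_pos _).le (by positivity),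
      cpow_pos_eq_exp (Real.exp_pos _), Real.log_exp,
      cpow_pos_eq_exp (Real.exp_pos _), Real.log_exp,
      abs_of_pos (by positivity), Complex.real_smul]
    push_cast
    have hexp : Complex.exp (2 * L * x) * Complex.exp ((w - 1) * (2 * (L:ℂ) * x)) =
        Complex.exp (-s * -((L:ℂ) * x)) * Complex.exp (-2 * Real.pi * Complex.I * m * x) := by
      rw [← Complex.exp_add, ← Complex.exp_add]
      congr 1
      rw [hwdef]
      field_simp
      ring
    linear_combination (2 * (L:ℂ) * ((1 + Complex.exp (2 * (L:ℂ) * x)) ^ (-s))) * hexp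
  calc (∫ x : ℝ, ((Real.rpow ε x + Real.rpow ε (-x) : ℝ) : ℂ) ^ (-s) *
        Complex.exp (-2 * Real.pi * Complex.I * m * x))
      = (2 * (L:ℂ))⁻¹ * ∫ x : ℝ, (2 * (L:ℂ)) *
          (((Real.rpow ε x + Real.rpow ε (-x) : ℝ) : ℂ) ^ (-s) *
            Complex.exp (-2 * Real.pi * Complex.I * m * x)) := by
        rw [MeasureTheory.integral_const_mul, ← mul_assoc, inv_mul_cancel₀ (by
          simpa using hLC), one_mul]
    _ = (2 * (L:ℂ))⁻¹ * (Complex.Gamma w * Complex.Gamma v / Complex.Gamma s) := by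
        rw [← hkey]
        congr 1
        exact (integral_congr_ae (Filter.Eventually.of_forall fun x => (hpt x))).symm
    _ = Complex.Gamma (s / 2 + Real.pi * Complex.I * m / Real.log ε) *
        Complex.Gamma (s / 2 - Real.pi * Complex.I * m / Real.log ε) /
          (2 * Complex.Gamma s * Real.log ε) := by
        rw [← hLdef, ← hvdef, ← hwdef]
        field_simp
end
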